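/- Let P be an involutive subset of the Tits boundary ∂X of a geodesically complete proper CAT(0) space X (with the Tits metric). Then the set P^⊥ = {x ∈ ∂X : d_Tits(x,y) = π/2 for all y ∈ P} is closed in the cone topology. -/

import Mathlib

open Real Filter

/-- Let `∂X` (abstracted as a topological space `B` with the cone
topology) carry the Tits metric `dT` (a possibly infinite metric, lower semicontinuous
with respect to the cone topology), in which every point has an antipode (a point at Tits
distance ≥ π).  If `P ⊆ B` is involutive (contains all antipodes of its points), then
`P^⊥ = {x | d_Tits(x,y) = π/2 for all y ∈ P}` is closed in the cone topology. -/
theorem perp_closed_of_involutive {B : Type*} [TopologicalSpace B]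
    (dT : B → B → ENNReal)
    (hsymm : ∀ a b, dT a b = dT b a)
    (htri : ∀ a b c, dT a c ≤ dT a b + dT b c)
    (hlsc : ∀ b : B, LowerSemicontinuous (fun a => dT a b))
    (hantipode : ∀ a : B, ∃ a' : B, ENNReal.ofReal π ≤ dT a a')
    (P : Set B)
    (hinv : ∀ p ∈ P, ∀ q : B, ENNReal.ofReal π ≤ dT p q → q ∈ P) :
    IsClosed {x : B | ∀ y ∈ P, dT x y = ENNReal.ofReal (π / 2)} := by
  have hpi : ENNReal.ofReal π = ENNReal.ofReal (π / 2) + ENNReal.ofReal (π / 2) := by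
    rw [← ENNReal.ofReal_add (by positivity) (by positivity)]
    ring_nf
  have hset : {x : B | ∀ y ∈ P, dT x y = ENNReal.ofReal (π / 2)} =
      {x : B | ∀ y ∈ P, dT x y ≤ ENNReal.ofReal (π / 2)} := by
    ext x
    simp only [Set.mem_setOf_eq]
    constructor
    · intro h y hy; exact (h y hy).le
    · intro h y hy
      refine le_antisymm (h y hy) ?_
      obtain ⟨y', hy'⟩ := hantipode y
      have hy'P : y' ∈ P := hinv y hy y' hy'
      have : ENNReal.ofReal π ≤ dT y x + ENNReal.ofReal (π / 2) :=
        hy'.trans ((htri y x y').trans (add_le_add_right (h y' hy'P) _))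
      rw [hpi, hsymm y x] at this
      exact (ENNReal.add_le_add_iff_right ENNReal.ofReal_ne_top).mp this
  rw [hset]
  have : {x : B | ∀ y ∈ P, dT x y ≤ ENNReal.ofReal (π / 2)} =
      ⋂ y ∈ P, {x : B | dT x y ≤ ENNReal.ofReal (π / 2)} := by
    ext x; simp
  rw [this]
  exact isClosed_biInter fun y _ =>
    (hlsc y).isClosed_preimage (ENNReal.ofReal (π / 2))
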